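/- Let n ≥ 2, let x₁, x₂ ∈ E^n, and let r₁, r₂ > 0. Then the metric spheres S(x₁, r₁) = {y : d(x₁,y) = r₁} and S(x₂, r₂) = {y : d(x₂,y) = r₂} have nonempty intersection if and only if |r₁ − r₂| ≤ d(x₁, x₂) ≤ r₁ + r₂. (This is part (1) of the Sphere Intersections Theorem in the Euclidean case, where the convexity radius is infinite.) -/

import Mathlib

open Real Submodule

lemma eq_of_sq_eq' {a b : ℝ} (ha : 0 ≤ a) (hb : 0 ≤ b) (h : a ^ 2 = b ^ 2) : a = b := by
  nlinarith

lemma exists_unit_orthogonal {n : ℕ} (hn : 2 ≤ n) (v : EuclideanSpace ℝ (Fin n)) :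
    ∃ u : EuclideanSpace ℝ (Fin n), ‖u‖ = 1 ∧ (inner ℝ v u : ℝ) = 0 := by
  have hfr : Module.finrank ℝ (EuclideanSpace ℝ (Fin n)) = n := by simp
  have h1 : Module.finrank ℝ (ℝ ∙ v) ≤ 1 := by
    rcases eq_or_ne v 0 with h | h
    · rw [h, Submodule.span_zero_singleton]; simp
    · rw [finrank_span_singleton h]
  have h2 := Submodule.finrank_add_finrank_orthogonal (K := (ℝ ∙ v))
  have hpos : 0 < Module.finrank ℝ ((ℝ ∙ v)ᗮ) := by omega
  have hne : ((ℝ ∙ v)ᗮ : Submodule ℝ (EuclideanSpace ℝ (Fin n))) ≠ ⊥ := by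
    intro hbot
    rw [hbot, finrank_bot] at hpos
    exact lt_irrefl 0 hpos
  obtain ⟨w, hw, hw0⟩ := Submodule.exists_mem_ne_zero_of_ne_bot hne
  refine ⟨‖w‖⁻¹ • w, ?_, ?_⟩
  · simp [norm_smul, norm_ne_zero_iff.2 hw0, inv_mul_cancel₀]
  · rw [real_inner_smul_right]
    have : (inner ℝ v w : ℝ) = 0 :=
      (Submodule.mem_orthogonal _ _).1 hw v (Submodule.mem_span_singleton_self v)
    simp [this]

theorem stmt_6 (n : ℕ) (hn : 2 ≤ n)
    (x₁ x₂ : EuclideanSpace ℝ (Fin n)) (r₁ r₂ : ℝ) (hr₁ : 0 < r₁) (hr₂ : 0 < r₂) :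
    ({y | dist x₁ y = r₁} ∩ {y | dist x₂ y = r₂}).Nonempty ↔
      |r₁ - r₂| ≤ dist x₁ x₂ ∧ dist x₁ x₂ ≤ r₁ + r₂ := by
  constructor
  · rintro ⟨y, h1, h2⟩
    simp only [Set.mem_setOf_eq] at h1 h2
    constructor
    · rw [← h1, ← h2]; exact abs_dist_sub_le x₁ x₂ y
    · rw [← h1, ← h2]; exact dist_triangle_right x₁ x₂ y
  · rintro ⟨hlo, hhi⟩
    set v : EuclideanSpace ℝ (Fin n) := x₂ - x₁ with hv
    set d : ℝ := dist x₁ x₂ with hd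
    have hdnn : 0 ≤ d := dist_nonneg
    have hdnorm : ‖v‖ = d := by rw [hv, hd, dist_eq_norm, norm_sub_rev]
    rcases eq_or_lt_of_le hdnn with hd0 | hd0
    · -- d = 0: x₁ = x₂ and r₁ = r₂
      have hx : x₁ = x₂ := by
        have : dist x₁ x₂ = 0 := by rw [← hd, ← hd0]
        exact dist_eq_zero.mp this
      have hr : r₁ = r₂ := by
        have h' : |r₁ - r₂| ≤ 0 := le_of_le_of_eq hlo hd0.symm
        have := abs_nonpos_iff.mp h'
        linarith
      obtain ⟨u, hu, -⟩ := exists_unit_orthogonal hn (0 : EuclideanSpace ℝ (Fin n))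
      refine ⟨x₁ + r₁ • u, ?_, ?_⟩
      · simp [dist_eq_norm, norm_smul, hu, abs_of_pos hr₁]
      · simp [← hx, dist_eq_norm, norm_smul, hu, abs_of_pos hr₂, hr]
    · -- d > 0
      set a : ℝ := (d ^ 2 + r₁ ^ 2 - r₂ ^ 2) / (2 * d) with ha
      have ha2 : a ^ 2 ≤ r₁ ^ 2 := by
        rw [ha, div_pow, div_le_iff₀ (by positivity)]
        have h1 : (d - r₁) ^ 2 ≤ r₂ ^ 2 := by
          have := abs_le.mp hlo
          nlinarith [sq_abs (d - r₁)]
        have h2 : r₂ ^ 2 ≤ (d + r₁) ^ 2 := by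
          have := abs_le.mp hlo
          nlinarith
        nlinarith [mul_nonneg (sub_nonneg.2 h2) (sub_nonneg.2 h1)]
      set h : ℝ := Real.sqrt (r₁ ^ 2 - a ^ 2) with hh
      have hh2 : h ^ 2 = r₁ ^ 2 - a ^ 2 := Real.sq_sqrt (by linarith)
      obtain ⟨u, hu, huv⟩ := exists_unit_orthogonal hn v
      refine ⟨x₁ + (a / d) • v + h • u, ?_, ?_⟩ <;> simp only [Set.mem_setOf_eq]
      · have : x₁ + (a / d) • v + h • u - x₁ = (a / d) • v + h • u := by abel
        rw [dist_eq_norm, norm_sub_rev, this]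
        have horth : (inner ℝ ((a / d) • v) (h • u) : ℝ) = 0 := by
          rw [real_inner_smul_left, real_inner_smul_right, huv]; ring
        have := norm_add_sq_eq_norm_sq_add_norm_sq_real horth
        have hn1 : ‖(a / d) • v‖ ^ 2 = a ^ 2 := by
          rw [norm_smul, hdnorm, mul_pow, Real.norm_eq_abs, sq_abs, div_pow]
          field_simp
        have hn2 : ‖h • u‖ ^ 2 = h ^ 2 := by
          rw [norm_smul, hu, mul_one, Real.norm_eq_abs, sq_abs]
        have hsq : ‖(a / d) • v + h • u‖ ^ 2 = r₁ ^ 2 := by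
          rw [sq, this, ← sq, ← sq, hn1, hn2, hh2]; ring
        exact eq_of_sq_eq' (norm_nonneg _) hr₁.le hsq
      · have hx2 : x₂ = x₁ + v := by rw [hv]; abel
        have : x₁ + (a / d) • v + h • u - x₂ = ((a - d) / d) • v + h • u := by
          rw [hx2, show (a - d) / d = a / d - 1 by field_simp, sub_smul, one_smul]
          abel
        rw [dist_eq_norm, norm_sub_rev, this]
        have horth : (inner ℝ (((a - d) / d) • v) (h • u) : ℝ) = 0 := by
          rw [real_inner_smul_left, real_inner_smul_right, huv]; ring
        have := norm_add_sq_eq_norm_sq_add_norm_sq_real horth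
        have hn1 : ‖((a - d) / d) • v‖ ^ 2 = (a - d) ^ 2 := by
          rw [norm_smul, hdnorm, mul_pow, Real.norm_eq_abs, sq_abs, div_pow]
          field_simp
        have hn2 : ‖h • u‖ ^ 2 = h ^ 2 := by
          rw [norm_smul, hu, mul_one, Real.norm_eq_abs, sq_abs]
        have hsq : ‖((a - d) / d) • v + h • u‖ ^ 2 = r₂ ^ 2 := by
          rw [sq, this, ← sq, ← sq, hn1, hn2, hh2, ha]
          field_simp
          ring
        exact eq_of_sq_eq' (norm_nonneg _) hr₂.le hsq
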